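/- Let μ₀, μ₁, μ₀′, μ₁′ ∈ ℝ with μ₀ ≤ min(μ₁, μ₀′, μ₁′) and μ₀′ ≤ μ₁′, and let σ > 0. Suppose max(|μ₁′−μ₀|, |μ₁−μ₀|, |μ₀′−μ₀|) ≤ 100σ and μ₁′ > μ₁. Then ‖f_{μ₀,μ₁} − f_{μ₀′,μ₁′}‖_TV ≥ π·δ₂ / (3200·√2·e·σ). -/

import Mathlib

open MeasureTheory ProbabilityTheory Real
open scoped ENNReal NNReal

/-- Total variation distance: `sup_A (f(A) - f'(A))` over measurable sets `A`. -/
noncomputable def tvDist {Ω : Type*} [MeasurableSpace Ω] (f f' : Measure Ω) : ℝ :=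
  ⨆ A : {A : Set Ω // MeasurableSet A}, ((f A.1).toReal - (f' A.1).toReal)

/-- One-dimensional two-component Gaussian mixture with component variance `v`. -/
noncomputable def mix1v (m₀ m₁ : ℝ) (v : ℝ≥0) : Measure ℝ :=
  (1/2 : ℝ≥0∞) • gaussianReal m₀ v + (1/2 : ℝ≥0∞) • gaussianReal m₁ v

/-- One-dimensional mixture `½·N(μ₀,σ²) + ½·N(μ₁,σ²)`. -/
noncomputable def mix1d (μ₀ μ₁ σ : ℝ) : Measure ℝ :=
  mix1v μ₀ μ₁ ⟨σ^2, sq_nonneg σ⟩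

noncomputable def vOf (σ : ℝ) : ℝ≥0 := ⟨σ^2, sq_nonneg σ⟩

lemma mix1d_eq (a b σ : ℝ) : mix1d a b σ = mix1v a b (vOf σ) := rfl

lemma vOf_ne_zero {σ : ℝ} (hσ : 0 < σ) : vOf σ ≠ 0 := by
  intro h
  have : ((vOf σ : ℝ≥0) : ℝ) = 0 := by rw [h]; simp
  have : σ ^ 2 = 0 := this
  exact hσ.ne' (by nlinarith)

lemma mix1d_comm (a b σ : ℝ) : mix1d a b σ = mix1d b a σ := by
  unfold mix1d mix1v; exact add_comm _ _

lemma le_tvDist {f f' : Measure ℝ} (hf : f Set.univ ≠ ⊤) {A : Set ℝ}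
    (hA : MeasurableSet A) :
    (f A).toReal - (f' A).toReal ≤ tvDist f f' := by
  have hbdd : BddAbove (Set.range fun B : {B : Set ℝ // MeasurableSet B} =>
      ((f B.1).toReal - (f' B.1).toReal)) := by
    refine ⟨(f Set.univ).toReal, ?_⟩
    rintro x ⟨B, rfl⟩
    calc (f B.1).toReal - (f' B.1).toReal ≤ (f B.1).toReal :=
          sub_le_self _ ENNReal.toReal_nonneg
      _ ≤ (f Set.univ).toReal :=
          ENNReal.toReal_mono hf (measure_mono (Set.subset_univ _))
  exact le_ciSup hbdd ⟨A, hA⟩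

lemma mix_toReal (a b σ : ℝ) (A : Set ℝ) :
    (mix1d a b σ A).toReal
      = 2⁻¹ * (gaussianReal a (vOf σ) A).toReal
        + 2⁻¹ * (gaussianReal b (vOf σ) A).toReal := by
  rw [mix1d_eq]
  unfold mix1v
  rw [Measure.add_apply, Measure.smul_apply, Measure.smul_apply, smul_eq_mul, smul_eq_mul,
    ENNReal.toReal_add (ENNReal.mul_ne_top (by norm_num) (measure_ne_top _ _))
      (ENNReal.mul_ne_top (by norm_num) (measure_ne_top _ _)),
    ENNReal.toReal_mul, ENNReal.toReal_mul]
  norm_num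

lemma gauss_Iic_shift (m y t : ℝ) (v : ℝ≥0) :
    gaussianReal (m + y) v (Set.Iic t) = gaussianReal m v (Set.Iic (t - y)) := by
  rw [← gaussianReal_map_add_const y,
    Measure.map_apply (measurable_add_const y) measurableSet_Iic]
  congr 1
  ext x
  simp [le_sub_iff_add_le]

lemma gauss_Iic_diff {σ : ℝ} (hσ : 0 < σ) {m m' : ℝ} (hm : m ≤ m') (t : ℝ) :
    (gaussianReal m (vOf σ) (Set.Iic t)).toReal
      - (gaussianReal m' (vOf σ) (Set.Iic t)).toReal
      = ∫ x in Set.Ioc (t - (m' - m)) t, gaussianPDFReal m (vOf σ) x := by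
  have hv := vOf_ne_zero hσ
  have h2 := gauss_Iic_shift m (m' - m) t (vOf σ)
  rw [show m + (m' - m) = m' by ring] at h2
  rw [h2, gaussianReal_apply_eq_integral _ hv, gaussianReal_apply_eq_integral _ hv,
    ENNReal.toReal_ofReal (integral_nonneg fun x => gaussianPDFReal_nonneg _ _ x),
    ENNReal.toReal_ofReal (integral_nonneg fun x => gaussianPDFReal_nonneg _ _ x)]
  have hunion : Set.Iic (t - (m' - m)) ∪ Set.Ioc (t - (m' - m)) t = Set.Iic t :=
    Set.Iic_union_Ioc_eq_Iic (by linarith)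
  rw [← hunion, setIntegral_union (Set.Iic_disjoint_Ioc le_rfl) measurableSet_Ioc
    ((integrable_gaussianPDFReal _ _).integrableOn)
    ((integrable_gaussianPDFReal _ _).integrableOn)]
  ring

lemma pdf_lb {σ : ℝ} (hσ : 0 < σ) {m x : ℝ} (hx : |x - m| ≤ σ) :
    Real.exp (-2⁻¹) / (Real.sqrt (2 * π) * σ) ≤ gaussianPDFReal m (vOf σ) x := by
  have hvc : ((vOf σ : ℝ≥0) : ℝ) = σ ^ 2 := rfl
  rw [gaussianPDFReal, hvc]
  have hs : Real.sqrt (2 * π * σ ^ 2) = Real.sqrt (2 * π) * σ := by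
    rw [Real.sqrt_mul (by positivity), Real.sqrt_sq hσ.le]
  rw [hs]
  have hexp : Real.exp (-2⁻¹) ≤ Real.exp (-(x - m) ^ 2 / (2 * σ ^ 2)) := by
    apply Real.exp_le_exp.mpr
    have h1 : (x - m) ^ 2 ≤ σ ^ 2 := by
      have := sq_abs (x - m)
      nlinarith [abs_nonneg (x - m)]
    have h2 : (x - m) ^ 2 / (2 * σ ^ 2) ≤ 2⁻¹ := by
      rw [div_le_iff₀ (by positivity)]
      nlinarith
    rw [neg_div]
    linarith
  rw [div_eq_inv_mul]
  exact mul_le_mul_of_nonneg_left hexp (by positivity)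

lemma key_num : π * Real.sqrt (2 * π) * 400
    ≤ 3200 * Real.sqrt 2 * (Real.exp (-2⁻¹) * Real.exp 1) := by
  have h1 : Real.exp (-2⁻¹) * Real.exp 1 = Real.exp 2⁻¹ := by
    rw [← Real.exp_add]; norm_num
  have hsq : Real.exp 2⁻¹ * Real.exp 2⁻¹ = Real.exp 1 := by
    rw [← Real.exp_add]; norm_num
  have he1 : (2 : ℝ) ≤ Real.exp 1 := by
    have := Real.add_one_le_exp 1; linarith
  have h2 : (1.4 : ℝ) ≤ Real.exp 2⁻¹ := by
    nlinarith [Real.exp_pos 2⁻¹]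
  have h3 : (1.4 : ℝ) ≤ Real.sqrt 2 := by
    nlinarith [Real.sq_sqrt (by norm_num : (0:ℝ) ≤ 2), Real.sqrt_nonneg 2]
  have h4 : Real.sqrt (2 * π) ≤ 2.6 := by
    have h := Real.sqrt_le_sqrt (show 2 * π ≤ 2.6 ^ 2 by nlinarith [Real.pi_lt_d2])
    rwa [Real.sqrt_sq (by norm_num)] at h
  have h5 : π ≤ 3.15 := Real.pi_lt_d2.le
  rw [h1]
  nlinarith [Real.pi_pos, Real.sqrt_nonneg (2 * π), Real.exp_pos 2⁻¹]

lemma main_aux (σ : ℝ) (hσ : 0 < σ) (a b a' b' : ℝ) (ha : a ≤ a') (hb : b ≤ b')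
    (hd : a' - a ≤ 200 * σ) :
    tvDist (mix1d a b σ) (mix1d a' b' σ) ≥
      π * (a' - a) / (3200 * Real.sqrt 2 * Real.exp 1 * σ) := by
  set d := a' - a with hd_def
  set s := min d σ with hs_def
  set t := a + s with ht_def
  have hd0 : 0 ≤ d := by linarith
  have hs0 : 0 ≤ s := le_min hd0 hσ.le
  have hsσ : s ≤ σ := min_le_right _ _
  have hsd : s ≤ d := min_le_left _ _
  set C : ℝ := Real.exp (-2⁻¹) / (Real.sqrt (2 * π) * σ) with hC_def
  -- step 1 : tvDist lower bound via Iic t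
  have hfin : mix1d a b σ Set.univ ≠ ⊤ := by
    rw [mix1d]
    unfold mix1v
    rw [Measure.add_apply, Measure.smul_apply, Measure.smul_apply, smul_eq_mul, smul_eq_mul]
    exact ENNReal.add_ne_top.2 ⟨ENNReal.mul_ne_top (by norm_num) (measure_ne_top (gaussianReal a (vOf σ)) _),
      ENNReal.mul_ne_top (by norm_num) (measure_ne_top (gaussianReal b (vOf σ)) _)⟩
  have h1 : (mix1d a b σ (Set.Iic t)).toReal - (mix1d a' b' σ (Set.Iic t)).toReal
      ≤ tvDist (mix1d a b σ) (mix1d a' b' σ) := le_tvDist hfin measurableSet_Iic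
  -- step 2 : expand difference
  have h2 : (mix1d a b σ (Set.Iic t)).toReal - (mix1d a' b' σ (Set.Iic t)).toReal
      = 2⁻¹ * (∫ x in Set.Ioc (t - d) t, gaussianPDFReal a (vOf σ) x)
        + 2⁻¹ * (∫ x in Set.Ioc (t - (b' - b)) t, gaussianPDFReal b (vOf σ) x) := by
    rw [mix_toReal, mix_toReal, ← gauss_Iic_diff hσ ha t, ← gauss_Iic_diff hσ hb t]
    ring
  have h3 : 0 ≤ ∫ x in Set.Ioc (t - (b' - b)) t, gaussianPDFReal b (vOf σ) x :=
    setIntegral_nonneg measurableSet_Ioc fun x _ => gaussianPDFReal_nonneg _ _ x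
  -- step 3 : lower bound the first integral
  have hsub : Set.Ioc a t ⊆ Set.Ioc (t - d) t :=
    Set.Ioc_subset_Ioc (by rw [ht_def]; linarith) le_rfl
  have h4 : (∫ x in Set.Ioc a t, gaussianPDFReal a (vOf σ) x)
      ≤ ∫ x in Set.Ioc (t - d) t, gaussianPDFReal a (vOf σ) x :=
    setIntegral_mono_set ((integrable_gaussianPDFReal _ _).integrableOn)
      (ae_of_all _ fun x => gaussianPDFReal_nonneg _ _ x) (HasSubset.Subset.eventuallyLE hsub)
  have h5 : s * C ≤ ∫ x in Set.Ioc a t, gaussianPDFReal a (vOf σ) x := by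
    have hconst : (∫ _x in Set.Ioc a t, C) = s * C := by
      rw [setIntegral_const, Real.volume_real_Ioc, show t - a = s by rw [ht_def]; ring,
        max_eq_left hs0, smul_eq_mul]
    rw [← hconst]
    refine setIntegral_mono_on
      (integrableOn_const (by rw [Real.volume_Ioc]; exact ENNReal.ofReal_ne_top))
      ((integrable_gaussianPDFReal _ _).integrableOn) measurableSet_Ioc ?_
    intro x hx
    refine pdf_lb hσ ?_
    rw [abs_le]
    constructor
    · have := hx.1; linarith
    · have := hx.2; rw [ht_def] at this; linarith
  -- step 4 : scalar comparison
  have hs200 : d / 200 ≤ s := le_min (by linarith) (by linarith)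
  have hfinal : π * d / (3200 * Real.sqrt 2 * Real.exp 1 * σ) ≤ 2⁻¹ * (s * C) := by
    have hP : (0:ℝ) < Real.sqrt (2 * π) := Real.sqrt_pos.mpr (by positivity)
    have hQ : (0:ℝ) < Real.sqrt 2 := Real.sqrt_pos.mpr (by norm_num)
    have hE : (0:ℝ) < Real.exp 1 := Real.exp_pos 1
    have hF : (0:ℝ) < Real.exp (-2⁻¹) := Real.exp_pos _
    have hC' : 2⁻¹ * (s * C) = s * Real.exp (-2⁻¹) / (2 * (Real.sqrt (2 * π) * σ)) := by
      rw [hC_def]; field_simp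
    rw [hC', div_le_div_iff₀ (by positivity) (by positivity)]
    have key := key_num
    nlinarith [mul_le_mul_of_nonneg_right key (mul_nonneg hs0 hσ.le),
      mul_le_mul_of_nonneg_right hs200
        (by positivity : (0:ℝ) ≤ π * Real.sqrt (2 * π) * σ * 2 * 200),
      mul_pos hP hσ, Real.pi_pos]
  rw [h2] at h1
  linarith [hfinal, h1, h3, h4, h5]

theorem stmt_18 (μ₀ μ₁ μ₀' μ₁' σ : ℝ) (hσ : 0 < σ)
    (h0 : μ₀ ≤ min μ₁ (min μ₀' μ₁')) (h1 : μ₀' ≤ μ₁')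
    (hball : max |μ₁' - μ₀| (max |μ₁ - μ₀| |μ₀' - μ₀|) ≤ 100 * σ)
    (hgt : μ₁' > μ₁) :
    tvDist (mix1d μ₀ μ₁ σ) (mix1d μ₀' μ₁' σ) ≥
      π * max |μ₀' - μ₀| |μ₁ - μ₁'| / (3200 * Real.sqrt 2 * Real.exp 1 * σ) := by
  have h00 : μ₀ ≤ μ₁ := le_trans h0 (min_le_left _ _)
  have h01 : μ₀ ≤ μ₀' := le_trans h0 (le_trans (min_le_right _ _) (min_le_left _ _))
  have hb1 : |μ₁' - μ₀| ≤ 100 * σ := le_trans (le_max_left _ _) hball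
  have hb2 : |μ₁ - μ₀| ≤ 100 * σ :=
    le_trans (le_trans (le_max_left _ _) (le_max_right _ _)) hball
  have hb3 : |μ₀' - μ₀| ≤ 100 * σ :=
    le_trans (le_trans (le_max_right _ _) (le_max_right _ _)) hball
  have e0 : |μ₀' - μ₀| = μ₀' - μ₀ := abs_of_nonneg (by linarith)
  have e1 : |μ₁ - μ₁'| = μ₁' - μ₁ := by
    rw [abs_sub_comm]; exact abs_of_nonneg (by linarith)
  have hd1 : μ₁' - μ₁ ≤ 200 * σ := by
    have g1 := (abs_le.1 hb1).2
    have g2 := (abs_le.1 hb2).1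
    linarith
  have hd0 : μ₀' - μ₀ ≤ 200 * σ := by
    have := (abs_le.1 hb3).2; linarith
  rcases max_cases |μ₀' - μ₀| |μ₁ - μ₁'| with ⟨hmax, _⟩ | ⟨hmax, _⟩
  · rw [hmax, e0]
    exact main_aux σ hσ μ₀ μ₁ μ₀' μ₁' h01 hgt.le hd0
  · rw [hmax, e1, mix1d_comm μ₀ μ₁, mix1d_comm μ₀' μ₁']
    exact main_aux σ hσ μ₁ μ₀ μ₁' μ₀' hgt.le h01 hd1
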